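/- Let a ∈ ℝ and let h : [a, ∞) → ℝ be a differentiable function such that h(t) → ∞ as t → ∞, the derivative h' is monotonically increasing on [a, ∞), and h'(a) > 0. Then ∫_a^∞ e^{−h(t)} dt ≤ e^{−h(a)}/h'(a). -/

import Mathlib

open MeasureTheory

/-- If `h : [a,∞) → ℝ` is differentiable with `h(t) → ∞` as `t → ∞`,
`h'` monotonically increasing on `[a,∞)`, and `h'(a) > 0`, then
`∫_a^∞ e^{−h(t)} dt ≤ e^{−h(a)}/h'(a)`. -/
theorem stmt19 (a : ℝ) (h h' : ℝ → ℝ)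
    (hderiv : ∀ t ∈ Set.Ici a, HasDerivAt h (h' t) t)
    (htends : Filter.Tendsto h Filter.atTop Filter.atTop)
    (hmono : MonotoneOn h' (Set.Ici a))
    (hpos : 0 < h' a) :
    ∫ t in Set.Ici a, Real.exp (-h t) ≤ Real.exp (-h a) / h' a := by
  set b := h' a with hb
  have hbne : b ≠ 0 := ne_of_gt hpos
  have hcont : ContinuousOn h (Set.Ici a) :=
    fun t ht => (hderiv t ht).continuousAt.continuousWithinAt
  -- lower bound on h
  have key : ∀ t ∈ Set.Ici a, h a + b * (t - a) ≤ h t := by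
    intro t ht
    have hg : MonotoneOn (fun t => h t - b * t) (Set.Ici a) := by
      apply monotoneOn_of_deriv_nonneg (convex_Ici a)
      · exact hcont.sub (continuousOn_const.mul continuousOn_id)
      · intro x hx
        rw [interior_Ici] at hx
        exact ((hderiv x (Set.mem_Ici.mpr (Set.mem_Ioi.mp hx).le)).sub ((hasDerivAt_id x).const_mul b)).differentiableAt.differentiableWithinAt
      · intro x hx
        rw [interior_Ici] at hx
        have hd : HasDerivAt (fun t => h t - b * t) (h' x - b) x := by
          exact ((hderiv x (Set.mem_Ici.mpr (Set.mem_Ioi.mp hx).le)).sub ((hasDerivAt_id' x).const_mul b)).congr_deriv (by ring)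
        rw [hd.deriv]
        have := hmono Set.self_mem_Ici (Set.mem_Ici.mpr (Set.mem_Ioi.mp hx).le) (Set.mem_Ioi.mp hx).le
        linarith
    have := hg Set.self_mem_Ici ht (Set.mem_Ici.mp ht)
    simp only at this
    nlinarith
  -- the dominating function
  set G : ℝ → ℝ := fun t => Real.exp (-h a) * Real.exp (-(b * (t - a))) with hG
  have hGint : IntegrableOn G (Set.Ici a) := by
    rw [integrableOn_Ici_iff_integrableOn_Ioi]
    have : IntegrableOn (fun x : ℝ => Real.exp (-b * x)) (Set.Ioi a) :=
      exp_neg_integrableOn_Ioi a hpos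
    have h2 : IntegrableOn (fun x : ℝ => (Real.exp (-h a) * Real.exp (b * a)) * Real.exp (-b * x)) (Set.Ioi a) :=
      this.const_mul _
    apply h2.congr_fun _ measurableSet_Ioi
    intro x _
    simp only [hG, ← Real.exp_add]
    ring_nf
  have hmonoInt : ∫ t in Set.Ici a, Real.exp (-h t) ≤ ∫ t in Set.Ici a, G t := by
    apply integral_mono_of_nonneg
    · exact Filter.Eventually.of_forall fun t => (Real.exp_pos _).le
    · exact hGint
    · filter_upwards [ae_restrict_mem measurableSet_Ici] with t ht
      simp only [hG, ← Real.exp_add]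
      apply Real.exp_le_exp.2
      linarith [key t ht]
  refine hmonoInt.trans_eq ?_
  -- compute ∫ G
  have hF : ∀ t : ℝ, HasDerivAt (fun t => -(1/b) * Real.exp (-(b * (t - a)))) (Real.exp (-(b * (t - a)))) t := by
    intro t
    have h1 : HasDerivAt (fun t : ℝ => -(b * (t - a))) (-b) t := by
      exact ((((hasDerivAt_id' t).sub_const a).const_mul b).neg).congr_deriv (by ring)
    have h2 := (Real.hasDerivAt_exp _).comp t h1
    have h3 := h2.const_mul (-(1/b))
    exact h3.congr_deriv (by rw [show -(1/b) * (Real.exp (-(b * (t - a))) * -b) = Real.exp (-(b * (t - a))) * (b⁻¹ * b) by ring, inv_mul_cancel₀ hbne, mul_one] )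
  have hFt : Filter.Tendsto (fun t => -(1/b) * Real.exp (-(b * (t - a)))) Filter.atTop (nhds 0) := by
    have : Filter.Tendsto (fun t : ℝ => -(b * (t - a))) Filter.atTop Filter.atBot := by
      apply Filter.tendsto_neg_atBot_iff.2
      have := Filter.Tendsto.const_mul_atTop hpos
        (Filter.tendsto_atTop_add_const_right Filter.atTop (-a) Filter.tendsto_id)
      simpa [sub_eq_add_neg] using this
    have := Real.tendsto_exp_atBot.comp this
    simpa using (this.const_mul (-(1/b)))
  have hEint : IntegrableOn (fun t => Real.exp (-(b * (t - a)))) (Set.Ioi a) := by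
    have := hGint
    rw [integrableOn_Ici_iff_integrableOn_Ioi] at this
    have h2 : IntegrableOn (fun x => Real.exp (h a) * G x) (Set.Ioi a) := this.const_mul (Real.exp (h a))
    apply h2.congr_fun _ measurableSet_Ioi
    intro x _
    simp [hG, ← Real.exp_add, ← mul_assoc]
  have hcomp : ∫ t in Set.Ioi a, Real.exp (-(b * (t - a))) = 1 / b := by
    rw [integral_Ioi_of_hasDerivAt_of_tendsto' (fun x _ => hF x) hEint hFt]
    simp
  rw [hG]
  simp only [integral_Ici_eq_integral_Ioi]
  rw [integral_const_mul, hcomp]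
  field_simp
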